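/- Let f : ℝ → ℝ and ε ∈ ℝ. Suppose γ : ℝ → ℝ is continuous, strictly increasing, satisfies γ(u+1) = γ(u) + 1 for all u, and the conjugacy equation γ(γ(u)) = 2γ(u) − u + ε·f(γ(u)) for all u ∈ ℝ. Then the function v ↦ 2v + ε·f(v) is strictly monotone increasing on ℝ; in particular, at every point v where f is differentiable, 2 + ε·f′(v) ≥ 0. -/

import Mathlib

/-- If `γ` is a continuous, strictly increasing conjugacy with
`γ(u+1) = γ(u) + 1` and `γ(γ(u)) = 2γ(u) − u + ε f(γ(u))` for all `u`, then the function
`v ↦ 2v + ε f(v)` is strictly monotone increasing; in particular, at every point where `f`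
is differentiable, `2 + ε f′(v) ≥ 0`. -/
theorem stmt1 (f : ℝ → ℝ) (ε : ℝ) (γ : ℝ → ℝ)
    (hγc : Continuous γ) (hγmono : StrictMono γ)
    (hγper : ∀ u, γ (u + 1) = γ u + 1)
    (hconj : ∀ u : ℝ, γ (γ u) = 2 * γ u - u + ε * f (γ u)) :
    StrictMono (fun v : ℝ => 2 * v + ε * f v) ∧
      ∀ v : ℝ, DifferentiableAt ℝ f v → 0 ≤ 2 + ε * deriv f v := by
  -- γ shifts by integers
  have hint : ∀ (u : ℝ) (n : ℤ), γ (u + n) = γ u + n := by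
    intro u n
    induction n using Int.induction_on with
    | zero => simp
    | succ k ih =>
        have := hγper (u + k)
        push_cast at ih ⊢
        rw [show u + ((k:ℝ) + 1) = u + k + 1 by ring]
        linarith
    | pred k ih =>
        have : γ (u + (-(k:ℝ) - 1) + 1) = γ (u + (-(k:ℝ) - 1)) + 1 := hγper _
        push_cast
        have h2 : u + (-(k:ℝ) - 1) + 1 = u + (-(k:ℝ)) := by ring
        rw [h2] at this
        push_cast at ih
        linarith
  -- γ is surjective
  have hsurj : Function.Surjective γ := by
    apply Continuous.surjective hγc
    · rw [Filter.tendsto_atTop]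
      intro b
      rw [Filter.eventually_atTop]
      refine ⟨(⌈b - γ 0⌉ : ℤ), fun u hu => ?_⟩
      have h1 : γ 0 + (⌈b - γ 0⌉ : ℝ) ≤ γ u := by
        have := hγmono.monotone hu
        rw [show ((⌈b - γ 0⌉ : ℤ) : ℝ) = 0 + ((⌈b - γ 0⌉ : ℤ) : ℝ) by ring, hint] at this
        linarith
      have := Int.le_ceil (b - γ 0)
      linarith
    · rw [Filter.tendsto_atBot]
      intro b
      rw [Filter.eventually_atBot]
      refine ⟨(⌊b - γ 0⌋ : ℤ), fun u hu => ?_⟩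
      have h1 : γ u ≤ γ 0 + (⌊b - γ 0⌋ : ℝ) := by
        have := hγmono.monotone hu
        rw [show ((⌊b - γ 0⌋ : ℤ) : ℝ) = 0 + ((⌊b - γ 0⌋ : ℤ) : ℝ) by ring, hint] at this
        linarith
      have := Int.floor_le (b - γ 0)
      linarith
  -- key identity: 2 γ u + ε f (γ u) = γ (γ u) + u
  have hkey : ∀ u : ℝ, 2 * γ u + ε * f (γ u) = γ (γ u) + u := by
    intro u; rw [hconj u]; ring
  have hsm : StrictMono (fun v : ℝ => 2 * v + ε * f v) := by
    intro v₁ v₂ hlt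
    obtain ⟨u₁, rfl⟩ := hsurj v₁
    obtain ⟨u₂, rfl⟩ := hsurj v₂
    have hu : u₁ < u₂ := hγmono.lt_iff_lt.mp hlt
    simp only
    rw [hkey, hkey]
    have := hγmono (hγmono hu)
    linarith
  refine ⟨hsm, fun v hf => ?_⟩
  set g : ℝ → ℝ := fun v : ℝ => 2 * v + ε * f v with hg
  have hd : HasDerivAt g (2 + ε * deriv f v) v := by
    have h1 : HasDerivAt (fun v : ℝ => 2 * v) 2 v := by
      simpa using (hasDerivAt_id v).const_mul (2 : ℝ)
    have h2 : HasDerivAt (fun v : ℝ => ε * f v) (ε * deriv f v) v :=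
      hf.hasDerivAt.const_mul ε
    exact h1.add h2
  have hslope : Filter.Tendsto (slope g v) (nhdsWithin v {v}ᶜ) (nhds (2 + ε * deriv f v)) :=
    hasDerivAt_iff_tendsto_slope.mp hd
  refine ge_of_tendsto hslope ?_
  filter_upwards [self_mem_nhdsWithin] with x hx
  rcases lt_or_gt_of_ne (hx : x ≠ v) with h | h
  · have := hsm h
    rw [slope_def_field]
    exact div_nonneg_of_nonpos (by simp only [g] at this ⊢; linarith) (by linarith)
  · have := hsm h
    rw [slope_def_field]
    exact div_nonneg (by simp only [g] at this ⊢; linarith) (by linarith)
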